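/- Let N ≥ 1 and define for x ∈ ℝ^N \ {0} the kernel K_{1/2}(x) := γ_N |x|^{-N} ∫₀^∞ e^{-t|x|} (t²+1)^{-(N+1)/2} dt with γ_N = Γ((N+1)/2) π^{-(N+1)/2}. Then lim_{|x|→0} |x|^N K_{1/2}(x) = Γ(N/2)/(2π^{N/2}) and lim_{|x|→∞} |x|^{N+1} K_{1/2}(x) = γ_N. -/

import Mathlib

open MeasureTheory Filter Set Real

lemma myInteg {a : ℝ} (ha : 1 ≤ a) :
    IntegrableOn (fun t : ℝ => (t ^ 2 + 1) ^ (-a)) (Set.Ioi (0:ℝ)) := by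
  have hpos : ∀ t : ℝ, (0:ℝ) < t ^ 2 + 1 := fun t => by positivity
  have hcont : Continuous (fun t : ℝ => (t ^ 2 + 1) ^ (-a)) := by
    apply Continuous.rpow_const (by continuity)
    exact fun t => Or.inl (hpos t).ne'
  refine Integrable.mono' integrable_inv_one_add_sq.integrableOn
    hcont.aestronglyMeasurable (ae_of_all _ fun t => ?_)
  have h1 : (1:ℝ) ≤ t ^ 2 + 1 := by nlinarith [sq_nonneg t]
  have h2 : (t ^ 2 + 1) ^ (-a) ≤ (t ^ 2 + 1) ^ (-1 : ℝ) :=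
    Real.rpow_le_rpow_of_exponent_le h1 (by linarith)
  rw [Real.rpow_neg_one] at h2
  rw [Real.norm_eq_abs, abs_of_nonneg (Real.rpow_nonneg (hpos t).le _)]
  calc (t ^ 2 + 1) ^ (-a) ≤ (t ^ 2 + 1)⁻¹ := h2
    _ = (1 + t ^ 2)⁻¹ := by ring_nf

lemma myDeriv {c : ℝ} (hc : 0 < c) (t : ℝ) :
    HasDerivAt (fun t : ℝ => t * (t ^ 2 + 1) ^ (-c))
      ((1 - 2*c) * (t ^ 2 + 1) ^ (-c) + 2*c * (t ^ 2 + 1) ^ (-(c+1))) t := by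
  have hpos : (0:ℝ) < t ^ 2 + 1 := by positivity
  have h1 : HasDerivAt (fun t : ℝ => t ^ 2 + 1) (2 * t) t := by
    simpa using (hasDerivAt_pow 2 t).add_const 1
  have h2 : HasDerivAt (fun t : ℝ => (t ^ 2 + 1) ^ (-c))
      (2 * t * (-c) * (t ^ 2 + 1) ^ (-c - 1)) t :=
    h1.rpow_const (Or.inl hpos.ne')
  have h3 := (hasDerivAt_id t).mul h2
  have key : (t ^ 2 + 1) * (t ^ 2 + 1) ^ (-(c+1)) = (t ^ 2 + 1) ^ (-c) := by
    have h := Real.rpow_add hpos 1 (-(c+1))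
    rw [Real.rpow_one] at h
    rw [← h]; ring_nf
  have hexp : (-c - 1 : ℝ) = -(c+1) := by ring
  rw [hexp] at h2 h3
  refine h3.congr_deriv ?_
  simp only [id_eq]
  linear_combination (-(2*c)) * key

lemma myTend0 {c : ℝ} (hc : 1/2 < c) :
    Filter.Tendsto (fun t : ℝ => t * (t ^ 2 + 1) ^ (-c)) atTop (nhds 0) := by
  have hb : Filter.Tendsto (fun t : ℝ => t ^ (1 - 2*c)) atTop (nhds 0) := by
    have heq : (1 - 2*c) = -(2*c - 1) := by ring
    rw [heq]
    exact tendsto_rpow_neg_atTop (by linarith)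
  apply squeeze_zero' (t₀ := atTop)
  · filter_upwards [eventually_ge_atTop (1:ℝ)] with t ht
    have : (0:ℝ) < t ^ 2 + 1 := by positivity
    positivity
  · filter_upwards [eventually_ge_atTop (1:ℝ)] with t ht
    have ht0 : (0:ℝ) < t := by linarith
    have h1 : (t ^ 2 + 1) ^ (-c) ≤ (t ^ 2) ^ (-c) :=
      Real.rpow_le_rpow_of_nonpos (by positivity) (by linarith) (by linarith)
    have h2 : t * (t ^ 2) ^ (-c) = t ^ (1 - 2*c) := by
      rw [← Real.rpow_natCast t 2, ← Real.rpow_mul ht0.le]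
      nth_rewrite 1 [← Real.rpow_one t]
      rw [← Real.rpow_add ht0]
      congr 1
      push_cast; ring
    calc t * (t ^ 2 + 1) ^ (-c) ≤ t * (t ^ 2) ^ (-c) :=
          mul_le_mul_of_nonneg_left h1 ht0.le
      _ = t ^ (1 - 2*c) := h2
  · exact hb

lemma myTend1 :
    Filter.Tendsto (fun t : ℝ => t * (t ^ 2 + 1) ^ (-(1/2:ℝ))) atTop (nhds 1) := by
  have h1 : Filter.Tendsto (fun t : ℝ => (1 + (t ^ 2)⁻¹) ^ (-(1/2:ℝ))) atTop (nhds 1) := by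
    have h2 : Filter.Tendsto (fun t : ℝ => 1 + (t ^ 2)⁻¹) atTop (nhds 1) := by
      have := (tendsto_pow_atTop (two_ne_zero)).inv_tendsto_atTop (α := ℝ)
      simpa using tendsto_const_nhds.add this
    have := h2.rpow_const (p := -(1/2:ℝ)) (Or.inl one_ne_zero)
    simpa using this
  apply h1.congr'
  filter_upwards [eventually_gt_atTop (0:ℝ)] with t ht
  have ht2 : (0:ℝ) < t ^ 2 := by positivity
  have hpos : (0:ℝ) < t ^ 2 + 1 := by positivity
  have h3 : 1 + (t ^ 2)⁻¹ = (t ^ 2 + 1) * (t ^ 2)⁻¹ := by field_simp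
  rw [h3, Real.mul_rpow hpos.le (by positivity), ← Real.rpow_neg_one (t^2),
    ← Real.rpow_mul ht2.le, ← Real.rpow_natCast t 2, ← Real.rpow_mul ht.le]
  norm_num
  ring

lemma myRec {c : ℝ} (hc : 1 ≤ c) :
    ∫ t in Set.Ioi (0:ℝ), (t ^ 2 + 1) ^ (-(c+1))
      = (2*c-1)/(2*c) * ∫ t in Set.Ioi (0:ℝ), (t ^ 2 + 1) ^ (-c) := by
  have hc0 : (0:ℝ) < c := by linarith
  have hint1 := myInteg hc
  have hint2 := myInteg (show (1:ℝ) ≤ c + 1 by linarith)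
  have hFTC := integral_Ioi_of_hasDerivAt_of_tendsto' (a := 0)
    (f := fun t : ℝ => t * (t ^ 2 + 1) ^ (-c))
    (f' := fun t : ℝ => (1 - 2*c) * (t ^ 2 + 1) ^ (-c) + 2*c * (t ^ 2 + 1) ^ (-(c+1)))
    (fun x _ => myDeriv hc0 x)
    (((hint1.const_mul _).add (hint2.const_mul _)))
    (myTend0 (by linarith))
  simp only [zero_mul, sub_zero] at hFTC
  rw [integral_add (hint1.const_mul _) (hint2.const_mul _),
    integral_const_mul, integral_const_mul] at hFTC
  have h2c : (2*c) ≠ 0 := by positivity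
  rw [div_mul_eq_mul_div, eq_div_iff h2c]
  linarith [hFTC]

lemma myJ (n : ℕ) (hn : 1 ≤ n) :
    ∫ t in Set.Ioi (0:ℝ), (t ^ 2 + 1) ^ (-((n:ℝ)+1)/2)
      = Real.sqrt Real.pi * Real.Gamma ((n:ℝ)/2) / (2 * Real.Gamma (((n:ℝ)+1)/2)) := by
  have hsπ : Real.sqrt Real.pi ≠ 0 := (Real.sqrt_pos.mpr Real.pi_pos).ne'
  induction n using Nat.strong_induction_on with
  | _ n ih =>
    match n, hn with
    | 1, _ =>
      have h1 : (-(((1:ℕ):ℝ)+1)/2) = (-1 : ℝ) := by norm_num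
      simp only [h1, Real.rpow_neg_one]
      have h2 : ∀ t : ℝ, (t ^ 2 + 1 : ℝ)⁻¹ = (1 + t ^ 2)⁻¹ := fun t => by ring_nf
      simp only [h2, integral_Ioi_inv_one_add_sq, Real.arctan_zero, sub_zero]
      norm_num [Real.Gamma_one_half_eq, Real.Gamma_one]
      have := Real.mul_self_sqrt Real.pi_pos.le
      nlinarith [this]
    | 2, _ =>
      have hd : ∀ x : ℝ, x ∈ Set.Ici (0:ℝ) →
          HasDerivAt (fun t : ℝ => t * (t ^ 2 + 1) ^ (-(1/2:ℝ)))
            ((x ^ 2 + 1) ^ (-(((2:ℕ):ℝ)+1)/2)) x := by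
        intro x _
        have := myDeriv (c := 1/2) (by norm_num) x
        have he : (-(((2:ℕ):ℝ)+1)/2) = -((1:ℝ)/2 + 1) := by norm_num
        rw [he]
        convert this using 1
        norm_num
      have hint : IntegrableOn (fun t : ℝ => (t ^ 2 + 1) ^ (-(((2:ℕ):ℝ)+1)/2))
          (Set.Ioi (0:ℝ)) := by
        have := myInteg (a := ((2:ℕ):ℝ)/2 + 1/2) (by norm_num)
        convert this using 3
        norm_num
      have hFTC := integral_Ioi_of_hasDerivAt_of_tendsto' (a := 0) hd hint myTend1
      norm_num at hFTC
      have he2 : (-(((2:ℕ):ℝ)+1)/2) = (-(3/2) : ℝ) := by norm_num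
      simp only [he2]
      rw [hFTC]
      have h32 : (((2:ℕ):ℝ)+1)/2 = 1/2 + 1 := by norm_num
      rw [h32, Real.Gamma_add_one (by norm_num), Real.Gamma_one_half_eq]
      have h1 : ((2:ℕ):ℝ)/2 = 1 := by norm_num
      rw [h1, Real.Gamma_one]
      field_simp
    | (m+3), _ =>
      have ih' := ih (m+1) (by omega) (by omega)
      set M := (m:ℝ) with hM
      have hc : (1:ℝ) ≤ (M + 1 + 1)/2 := by
        have : (0:ℝ) ≤ M := Nat.cast_nonneg m
        linarith
      have h1 : (-((((m+3:ℕ)):ℝ)+1)/2) = -((M + 1 + 1)/2 + 1) := by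
        push_cast; ring
      have h2 : (-((((m+1:ℕ)):ℝ)+1)/2) = -((M + 1 + 1)/2) := by
        push_cast; ring
      rw [h2] at ih'
      simp only [h1, myRec hc, ih']
      have hg1 : ((((m+3:ℕ)):ℝ))/2 = ((((m+1:ℕ)):ℝ))/2 + 1 := by push_cast; ring
      have hg2 : ((((m+3:ℕ)):ℝ)+1)/2 = ((((m+1:ℕ)):ℝ)+1)/2 + 1 := by push_cast; ring
      rw [hg1, hg2, Real.Gamma_add_one (by positivity), Real.Gamma_add_one (by positivity)]
      have hΓ1 : 0 < Real.Gamma ((((m+1:ℕ)):ℝ)/2) := Real.Gamma_pos_of_pos (by positivity)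
      have hΓ2 : 0 < Real.Gamma (((((m+1:ℕ)):ℝ)+1)/2) := Real.Gamma_pos_of_pos (by positivity)
      have hM2 : (0:ℝ) < M + 1 + 1 := by positivity
      push_cast
      field_simp
      ring

lemma limZero (N : ℕ) (hN : 1 ≤ N) :
    Filter.Tendsto (fun r : ℝ => ∫ t in Set.Ioi (0:ℝ),
        Real.exp (-(t * r)) * (t ^ 2 + 1) ^ (-((N:ℝ)+1)/2))
      (nhdsWithin 0 (Set.Ici 0))
      (nhds (∫ t in Set.Ioi (0:ℝ), (t ^ 2 + 1) ^ (-((N:ℝ)+1)/2))) := by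
  have hexp : (-((N:ℝ)+1)/2) = -(((N:ℝ)+1)/2) := by ring
  set a : ℝ := ((N:ℝ)+1)/2 with ha
  have ha1 : (1:ℝ) ≤ a := by
    rw [ha]
    have : (1:ℝ) ≤ (N:ℝ) := by exact_mod_cast hN
    linarith
  simp only [hexp]
  have hcont : Continuous (fun t : ℝ => (t ^ 2 + 1) ^ (-a)) := by
    apply Continuous.rpow_const (by continuity)
    exact fun t => Or.inl (by positivity)
  apply tendsto_integral_filter_of_dominated_convergence (fun t => (t ^ 2 + 1) ^ (-a))
  · apply Filter.Eventually.of_forall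
    intro r
    apply Continuous.aestronglyMeasurable
    exact (Real.continuous_exp.comp (continuous_id.mul continuous_const).neg).mul hcont
  · filter_upwards [self_mem_nhdsWithin] with r hr
    rw [ae_restrict_iff' measurableSet_Ioi]
    refine Filter.Eventually.of_forall fun t ht => ?_
    have ht0 : (0:ℝ) < t := ht
    have hrpow : (0:ℝ) ≤ (t ^ 2 + 1) ^ (-a) := Real.rpow_nonneg (by positivity) _
    rw [Real.norm_eq_abs, abs_mul, abs_of_nonneg (Real.exp_nonneg _), abs_of_nonneg hrpow]
    have : Real.exp (-(t * r)) ≤ 1 := by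
      rw [Real.exp_le_one_iff]
      have : (0:ℝ) ≤ t * r := mul_nonneg ht0.le hr
      linarith
    exact mul_le_of_le_one_left hrpow this
  · exact myInteg ha1
  · refine Filter.Eventually.of_forall fun t => ?_
    have h1 : Filter.Tendsto (fun r : ℝ => Real.exp (-(t * r))) (nhds 0) (nhds 1) := by
      have hc : Continuous (fun r : ℝ => Real.exp (-(t * r))) :=
        Real.continuous_exp.comp (continuous_const.mul continuous_id).neg
      have := hc.tendsto 0
      simpa using this
    simpa using ((h1.mono_left nhdsWithin_le_nhds).mul_const ((t ^ 2 + 1) ^ (-a)))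

lemma limInfty (N : ℕ) (hN : 1 ≤ N) :
    Filter.Tendsto (fun r : ℝ => r * ∫ t in Set.Ioi (0:ℝ),
        Real.exp (-(t * r)) * (t ^ 2 + 1) ^ (-((N:ℝ)+1)/2))
      atTop (nhds 1) := by
  have hexp : (-((N:ℝ)+1)/2) = -(((N:ℝ)+1)/2) := by ring
  set a : ℝ := ((N:ℝ)+1)/2 with ha
  have ha0 : (0:ℝ) < a := by positivity
  simp only [hexp]
  set G : ℝ → ℝ := fun r => ∫ s in Set.Ioi (0:ℝ),
    Real.exp (-s) * ((s/r) ^ 2 + 1) ^ (-a) with hG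
  have hGlim : Filter.Tendsto G atTop (nhds 1) := by
    have hval : (1:ℝ) = ∫ s in Set.Ioi (0:ℝ), Real.exp (-s) := by
      rw [integral_exp_neg_Ioi_zero]
    rw [hval]
    apply tendsto_integral_filter_of_dominated_convergence (fun s => Real.exp (-s))
    · refine Filter.Eventually.of_forall fun r => Continuous.aestronglyMeasurable ?_
      refine (Real.continuous_exp.comp continuous_neg).mul ?_
      apply Continuous.rpow_const (by continuity)
      exact fun s => Or.inl (by positivity)
    · refine Filter.Eventually.of_forall fun r => Filter.Eventually.of_forall fun s => ?_
      have h1 : ((s/r) ^ 2 + 1 : ℝ) ^ (-a) ≤ 1 :=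
        Real.rpow_le_one_of_one_le_of_nonpos (by nlinarith [sq_nonneg (s/r)]) (by linarith)
      rw [Real.norm_eq_abs, abs_mul, abs_of_nonneg (Real.exp_nonneg _),
        abs_of_nonneg (Real.rpow_nonneg (by positivity) _)]
      exact mul_le_of_le_one_right (Real.exp_nonneg _) h1
    · exact (by simpa using exp_neg_integrableOn_Ioi 0 one_pos :
        IntegrableOn (fun s : ℝ => Real.exp (-s)) (Set.Ioi 0))
    · refine Filter.Eventually.of_forall fun s => ?_
      have hdiv : Filter.Tendsto (fun r : ℝ => s / r) atTop (nhds 0) :=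
        tendsto_const_nhds.div_atTop tendsto_id
      have hC : Continuous (fun u : ℝ => Real.exp (-s) * (u ^ 2 + 1) ^ (-a)) := by
        refine continuous_const.mul ?_
        apply Continuous.rpow_const (by continuity)
        exact fun u => Or.inl (by positivity)
      have := (hC.tendsto 0).comp hdiv
      simpa [Function.comp_def] using this
  apply hGlim.congr'
  filter_upwards [eventually_gt_atTop (0:ℝ)] with r hr
  have hr0 : r ≠ 0 := hr.ne'
  have hkey := integral_comp_mul_left_Ioi
    (fun s => Real.exp (-s) * ((s/r) ^ 2 + 1) ^ (-a)) 0 hr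
  simp only [mul_zero] at hkey
  have hre : ∀ t ∈ Set.Ioi (0:ℝ),
      Real.exp (-(t * r)) * (t ^ 2 + 1) ^ (-a)
        = Real.exp (-(r * t)) * ((r * t / r) ^ 2 + 1) ^ (-a) := by
    intro t _
    rw [mul_comm r t, mul_div_assoc, div_self hr0, mul_one]
  rw [hG]
  rw [setIntegral_congr_fun measurableSet_Ioi hre, hkey, smul_eq_mul, ← mul_assoc,
    mul_inv_cancel₀ hr0, one_mul]

theorem K_half_asymptotics (N : ℕ) (hN : 1 ≤ N) :
    Tendsto (fun x : EuclideanSpace ℝ (Fin N) =>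
        ‖x‖ ^ (N:ℝ) *
          ((Real.Gamma (((N:ℝ)+1)/2) / Real.pi ^ (((N:ℝ)+1)/2)) * ‖x‖ ^ (-(N:ℝ)) *
            ∫ t in Set.Ioi (0:ℝ), Real.exp (-(t * ‖x‖)) * (t^2 + 1) ^ (-((N:ℝ)+1)/2)))
      (nhdsWithin 0 {0}ᶜ) (nhds (Real.Gamma ((N:ℝ)/2) / (2 * Real.pi ^ ((N:ℝ)/2)))) ∧
    Tendsto (fun x : EuclideanSpace ℝ (Fin N) =>
        ‖x‖ ^ ((N:ℝ) + 1) *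
          ((Real.Gamma (((N:ℝ)+1)/2) / Real.pi ^ (((N:ℝ)+1)/2)) * ‖x‖ ^ (-(N:ℝ)) *
            ∫ t in Set.Ioi (0:ℝ), Real.exp (-(t * ‖x‖)) * (t^2 + 1) ^ (-((N:ℝ)+1)/2)))
      (Filter.comap (fun x : EuclideanSpace ℝ (Fin N) => ‖x‖) atTop)
      (nhds (Real.Gamma (((N:ℝ)+1)/2) / Real.pi ^ (((N:ℝ)+1)/2))) := by
  set γ : ℝ := Real.Gamma (((N:ℝ)+1)/2) / Real.pi ^ (((N:ℝ)+1)/2) with hγ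
  set I : ℝ → ℝ := fun r => ∫ t in Set.Ioi (0:ℝ),
    Real.exp (-(t * r)) * (t ^ 2 + 1) ^ (-((N:ℝ)+1)/2) with hI
  have hΓpos : 0 < Real.Gamma (((N:ℝ)+1)/2) := Real.Gamma_pos_of_pos (by positivity)
  have hπpow : (0:ℝ) < Real.pi ^ (((N:ℝ)+1)/2) := Real.rpow_pos_of_pos Real.pi_pos _
  have hconst : γ * (Real.sqrt Real.pi * Real.Gamma ((N:ℝ)/2)
      / (2 * Real.Gamma (((N:ℝ)+1)/2)))
      = Real.Gamma ((N:ℝ)/2) / (2 * Real.pi ^ ((N:ℝ)/2)) := by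
    have hsplit : Real.pi ^ (((N:ℝ)+1)/2)
        = Real.pi ^ ((N:ℝ)/2) * Real.sqrt Real.pi := by
      rw [show (((N:ℝ)+1)/2) = (N:ℝ)/2 + 1/2 by ring,
        Real.rpow_add Real.pi_pos, ← Real.sqrt_eq_rpow]
    have h1 : (0:ℝ) < Real.pi ^ ((N:ℝ)/2) := Real.rpow_pos_of_pos Real.pi_pos _
    have h2 : (0:ℝ) < Real.sqrt Real.pi := Real.sqrt_pos.mpr Real.pi_pos
    rw [hγ, hsplit]
    field_simp
  constructor
  · -- limit at 0
    have hnorm : Filter.Tendsto (fun x : EuclideanSpace ℝ (Fin N) => ‖x‖)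
        (nhdsWithin 0 {0}ᶜ) (nhdsWithin 0 (Set.Ici 0)) := by
      rw [tendsto_nhdsWithin_iff]
      constructor
      · have := (continuous_norm (E := EuclideanSpace ℝ (Fin N))).tendsto 0
        simpa using this.mono_left nhdsWithin_le_nhds
      · exact Filter.Eventually.of_forall fun x => norm_nonneg x
    have T1 : Filter.Tendsto (fun x : EuclideanSpace ℝ (Fin N) => γ * I ‖x‖)
        (nhdsWithin 0 {0}ᶜ)
        (nhds (Real.Gamma ((N:ℝ)/2) / (2 * Real.pi ^ ((N:ℝ)/2)))) := by
      rw [← hconst, ← myJ N hN]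
      exact (((limZero N hN).comp hnorm).const_mul γ)
    apply T1.congr'
    filter_upwards [self_mem_nhdsWithin] with x hx
    have hx0 : x ≠ 0 := hx
    have hn : (0:ℝ) < ‖x‖ := norm_pos_iff.mpr hx0
    have key : ‖x‖ ^ ((N:ℝ)) * ‖x‖ ^ (-(N:ℝ)) = 1 := by
      rw [← Real.rpow_add hn]; simp
    calc γ * I ‖x‖ = (‖x‖ ^ ((N:ℝ)) * ‖x‖ ^ (-(N:ℝ))) * (γ * I ‖x‖) := by
          rw [key, one_mul]
      _ = ‖x‖ ^ ((N:ℝ)) * (γ * ‖x‖ ^ (-(N:ℝ)) * I ‖x‖) := by ring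
  · -- limit at infinity
    have hnorm : Filter.Tendsto (fun x : EuclideanSpace ℝ (Fin N) => ‖x‖)
        (Filter.comap (fun x : EuclideanSpace ℝ (Fin N) => ‖x‖) atTop) atTop :=
      Filter.tendsto_comap
    have T2 : Filter.Tendsto (fun x : EuclideanSpace ℝ (Fin N) => γ * (‖x‖ * I ‖x‖))
        (Filter.comap (fun x : EuclideanSpace ℝ (Fin N) => ‖x‖) atTop) (nhds γ) := by
      have h := ((limInfty N hN).comp hnorm).const_mul γ
      rw [mul_one] at h
      exact h
    apply T2.congr'
    filter_upwards [hnorm.eventually (eventually_gt_atTop (0:ℝ))] with x hx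
    have key : ‖x‖ ^ ((N:ℝ) + 1) * ‖x‖ ^ (-(N:ℝ)) = ‖x‖ := by
      rw [← Real.rpow_add hx]
      norm_num
    calc γ * (‖x‖ * I ‖x‖)
        = (‖x‖ ^ ((N:ℝ) + 1) * ‖x‖ ^ (-(N:ℝ))) * (γ * I ‖x‖) := by rw [key]; ring
      _ = ‖x‖ ^ ((N:ℝ) + 1) * (γ * ‖x‖ ^ (-(N:ℝ)) * I ‖x‖) := by ring
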